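/- arXiv:2306.08974 — 3 statements merged into one kernel-verified Lean document; each statement's English description precedes it below -/
import Mathlib

section
/- Let G = (V, E) be a multihypergraph with a finite-dimensional Hilbert space H_v = ℂ^{d_v} at each vertex and a self-adjoint interaction Φ(ε) on H_ε = ⨂_{v∈ε} H_v assigned to each edge ε, regarded as acting on H_G = ⨂_{v∈V} H_v by tensoring with the identity. Let H_G = Σ_{ε∈E} Φ(ε), let tr be the trace normalized so that tr(I) = 1, and let β ∈ ℂ. Then Z_G(β) = tr[e^{−β H_G}] = Σ_{S ⊆ E} Π_{γ ∈ comp(S)} w_γ, where comp(S) is the set of maximal connected components of the subgraph with edge set S, and for a connected subgraph γ, w_γ = (−1)^{‖γ‖} Σ_{T ⊆ E(γ)} (−1)^{|T|} tr[ e^{−β Σ_{ε∈T} Φ(ε)} ] (the normalized trace taken over ⨂_{v∈V(γ)} H_v, with ‖γ‖ the number of edges of γ). The empty set S = ∅ contributes 1. -/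
open scoped Classical Matrix

namespace Stmt14

variable {V Eg : Type*}

/-- Configurations of the qudits in a subset `T` of the vertices: the index set of a
basis of `⨂_{v∈T} ℂ^{d_v}`. -/
abbrev Loc {V : Type*} (dim : V → ℕ) (T : Finset V) : Type _ := ∀ v : T, Fin (dim v)

/-- Configurations of all qudits: the index set of a basis of `H_G = ⨂_{v∈V} ℂ^{d_v}`. -/
abbrev Glob (dim : V → ℕ) : Type _ := ∀ v : V, Fin (dim v)

/-- The lift of an operator on `⨂_{v∈S} ℂ^{d_v}` to an operator on `⨂_{v∈T} ℂ^{d_v}`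
(for `S ⊆ T`), tensoring with the identity elsewhere. -/
noncomputable def liftMat {dim : V → ℕ} {S T : Finset V} (h : S ⊆ T)
    (A : Matrix (Loc dim S) (Loc dim S) ℂ) : Matrix (Loc dim T) (Loc dim T) ℂ :=
  fun x y => (if ∀ v : T, ↑v ∉ S → x v = y v then 1 else 0) *
    A (fun v => x ⟨v.1, h v.2⟩) (fun v => y ⟨v.1, h v.2⟩)

/-- The lift of an operator on `⨂_{v∈S} ℂ^{d_v}` to an operator on the full space,
tensoring with the identity elsewhere. -/
noncomputable def liftGlobal (dim : V → ℕ) (S : Finset V)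
    (A : Matrix (Loc dim S) (Loc dim S) ℂ) : Matrix (Glob dim) (Glob dim) ℂ :=
  fun x y => (if ∀ v : V, v ∉ S → x v = y v then 1 else 0) *
    A (fun v => x v) (fun v => y v)

/-- The trace normalized so that the trace of the identity is `1`. -/
noncomputable def ntraceM {n : Type*} [Fintype n] (M : Matrix n n ℂ) : ℂ :=
  Matrix.trace M / (Fintype.card n : ℂ)

/-- The vertex set `V(S) = ⋃_{ε∈S} ε` of the subgraph determined by a set `S` of edges. -/
abbrev vertexSet [DecidableEq V] (edge : Eg → Finset V) (S : Finset Eg) : Finset V :=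
  S.biUnion edge

/-- A subgraph determined by a set `S` of edges is connected. -/
def ConnectedSub [DecidableEq V] (edge : Eg → Finset V) (S : Finset Eg) : Prop :=
  S.Nonempty ∧ ∀ a ∈ S, ∀ b ∈ S,
    Relation.ReflTransGen (fun x y => x ∈ S ∧ y ∈ S ∧ (edge x ∩ edge y).Nonempty) a b

/-- `T` is a maximal connected component of the subgraph determined by `S`. -/
def IsComponent [DecidableEq V] (edge : Eg → Finset V) (S T : Finset Eg) : Prop :=
  T ⊆ S ∧ ConnectedSub edge T ∧
    ∀ T' : Finset Eg, T ⊆ T' → T' ⊆ S → ConnectedSub edge T' → T' = T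

/-- The set `comp(S)` of maximal connected components of the subgraph determined by `S`. -/
noncomputable def comp [DecidableEq V] [Fintype Eg] (edge : Eg → Finset V) (S : Finset Eg) :
    Finset (Finset Eg) :=
  Finset.univ.filter (fun T => IsComponent edge S T)

/-- The polymer weight
`w_γ = (−1)^{‖γ‖} Σ_{T ⊆ E(γ)} (−1)^{|T|} tr[e^{−β Σ_{ε∈T} Φ(ε)}]`, the normalized
trace taken over `⨂_{v∈V(γ)} ℂ^{d_v}`. -/
noncomputable def weight [DecidableEq V] (edge : Eg → Finset V) (dim : V → ℕ)
    (Φ : ∀ e : Eg, Matrix (Loc dim (edge e)) (Loc dim (edge e)) ℂ)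
    (β : ℂ) (γ : Finset Eg) : ℂ :=
  (-1 : ℂ) ^ γ.card *
    ∑ T ∈ γ.powerset, (-1 : ℂ) ^ T.card *
      ntraceM (NormedSpace.exp
        ((-β) • ∑ e ∈ T,
          (if he : e ∈ γ then
            liftMat (Finset.subset_biUnion_of_mem edge he) (Φ e)
          else 0 :
            Matrix (Loc dim (vertexSet edge γ)) (Loc dim (vertexSet edge γ)) ℂ)))


/-! ### Infrastructure -/

section Infra

variable {dim : V → ℕ}

/-- Restriction of a global configuration to a subset of vertices. -/
def res (S : Finset V) (x : Glob dim) : Loc dim S := fun v => x v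

/-- Restriction of a local configuration to a smaller subset. -/
def resL {S T : Finset V} (h : S ⊆ T) (x : Loc dim T) : Loc dim S := fun v => x ⟨v.1, h v.2⟩

lemma liftGlobal_apply (S : Finset V) (A : Matrix (Loc dim S) (Loc dim S) ℂ) (x y : Glob dim) :
    liftGlobal dim S A x y =
      (if ∀ v : V, v ∉ S → x v = y v then (1 : ℂ) else 0) * A (res S x) (res S y) := rfl

variable [DecidableEq V] [Fintype V]

/-- Splitting a global configuration into the part on `S` and the part on `Sᶜ`. -/
def globEquiv (S : Finset V) : Glob dim ≃ Loc dim S × Loc dim Sᶜ where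
  toFun x := (res S x, res Sᶜ x)
  invFun p := fun v => if h : v ∈ S then p.1 ⟨v, h⟩ else p.2 ⟨v, Finset.mem_compl.2 h⟩
  left_inv x := by
    funext v
    by_cases h : v ∈ S <;> simp [res, h]
  right_inv p := by
    obtain ⟨p₁, p₂⟩ := p
    simp only [Prod.mk.injEq]
    constructor
    · funext v
      simp only [res]
      rw [dif_pos v.2]
    · funext v
      simp only [res]
      rw [dif_neg (Finset.mem_compl.1 v.2)]

@[simp] lemma res_globEquiv_symm_fst (S : Finset V) (p : Loc dim S × Loc dim Sᶜ) :
    res S ((globEquiv (dim := dim) S).symm p) = p.1 := by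
  funext v
  simp only [globEquiv, Equiv.coe_fn_symm_mk, res]
  rw [dif_pos v.2]

@[simp] lemma res_globEquiv_symm_snd (S : Finset V) (p : Loc dim S × Loc dim Sᶜ) :
    res Sᶜ ((globEquiv (dim := dim) S).symm p) = p.2 := by
  funext v
  simp only [globEquiv, Equiv.coe_fn_symm_mk, res]
  rw [dif_neg (Finset.mem_compl.1 v.2)]

lemma sum_res (S : Finset V) (F : Loc dim S → ℂ) :
    ∑ x : Glob dim, F (res S x) = Fintype.card (Loc dim Sᶜ) • ∑ w, F w := by
  rw [← Equiv.sum_comp (globEquiv (dim := dim) S).symm (fun x => F (res S x))]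
  simp only [res_globEquiv_symm_fst]
  rw [Fintype.sum_prod_type]
  simp [Finset.sum_const, Finset.smul_sum]

lemma card_glob (S : Finset V) :
    Fintype.card (Glob dim) = Fintype.card (Loc dim S) * Fintype.card (Loc dim Sᶜ) := by
  rw [← Fintype.card_prod]
  exact Fintype.card_congr (globEquiv S)

lemma card_loc_pos (hdim : ∀ v, 0 < dim v) (T : Finset V) : 0 < Fintype.card (Loc dim T) :=
  @Fintype.card_pos _ _ ⟨fun v => ⟨0, hdim v⟩⟩

lemma trace_liftGlobal (S : Finset V) (A : Matrix (Loc dim S) (Loc dim S) ℂ) :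
    (liftGlobal dim S A).trace = Fintype.card (Loc dim Sᶜ) • A.trace := by
  have h : ∀ x : Glob dim, liftGlobal dim S A x x = A (res S x) (res S x) := fun x => by
    rw [liftGlobal_apply, if_pos (fun v _ => rfl), one_mul]
  simp only [Matrix.trace, Matrix.diag, h]
  exact sum_res S (fun w => A w w)

lemma ntrace_liftGlobal (hdim : ∀ v, 0 < dim v) (S : Finset V)
    (A : Matrix (Loc dim S) (Loc dim S) ℂ) :
    ntraceM (liftGlobal dim S A) = ntraceM A := by
  have h1 : (Fintype.card (Loc dim S) : ℂ) ≠ 0 :=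
    Nat.cast_ne_zero.2 (card_loc_pos hdim S).ne'
  have h2 : (Fintype.card (Loc dim Sᶜ) : ℂ) ≠ 0 :=
    Nat.cast_ne_zero.2 (card_loc_pos hdim Sᶜ).ne'
  unfold ntraceM
  rw [trace_liftGlobal, card_glob (dim := dim) S, nsmul_eq_mul, Nat.cast_mul,
    mul_comm ((Fintype.card (Loc dim S) : ℂ)), mul_div_mul_left _ _ h2]

lemma cond_iff (S : Finset V) (x y : Glob dim) :
    (∀ v : V, v ∉ S → x v = y v) ↔ res Sᶜ x = res Sᶜ y := by
  rw [funext_iff]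
  constructor
  · intro h v
    exact h v.1 (Finset.mem_compl.1 v.2)
  · intro h v hv
    exact h ⟨v, Finset.mem_compl.2 hv⟩

lemma liftGlobal_mul (S : Finset V) (A B : Matrix (Loc dim S) (Loc dim S) ℂ) :
    liftGlobal dim S A * liftGlobal dim S B = liftGlobal dim S (A * B) := by
  ext x y
  rw [Matrix.mul_apply, ← Equiv.sum_comp (globEquiv (dim := dim) S).symm]
  simp only [liftGlobal_apply, cond_iff, res_globEquiv_symm_fst, res_globEquiv_symm_snd,
    Matrix.mul_apply]
  rw [Fintype.sum_prod_type]
  simp only [boole_mul, mul_ite, mul_zero, ite_mul, zero_mul, Finset.mul_sum]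
  rw [Finset.sum_comm]
  simp [Finset.sum_ite_eq, mul_comm]

end Infra


section Infra2

variable {dim : V → ℕ} [DecidableEq V] [Fintype V]

lemma liftGlobal_mul_apply_disjoint {S S' : Finset V} (h : Disjoint S S')
    (A : Matrix (Loc dim S) (Loc dim S) ℂ) (B : Matrix (Loc dim S') (Loc dim S') ℂ)
    (x y : Glob dim) :
    (liftGlobal dim S A * liftGlobal dim S' B) x y =
      (if ∀ v : V, v ∉ S → v ∉ S' → x v = y v then (1 : ℂ) else 0) *
        (A (res S x) (res S y) * B (res S' x) (res S' y)) := by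
  classical
  rw [Matrix.mul_apply]
  set z₀ : Glob dim := fun v => if v ∈ S then y v else x v with hz₀
  have hz₀v : ∀ v : V, z₀ v = if v ∈ S then y v else x v := fun v => rfl
  have hvan : ∀ z : Glob dim, z ≠ z₀ →
      liftGlobal dim S A x z * liftGlobal dim S' B z y = 0 := by
    intro z hz
    obtain ⟨v, hv⟩ := Function.ne_iff.1 hz
    by_cases hvS : v ∈ S
    · have hvS' : v ∉ S' := Finset.disjoint_left.1 h hvS
      have hne : ¬ (∀ v : V, v ∉ S' → z v = y v) := fun hc => by
        apply hv
        rw [hc v hvS', hz₀v, if_pos hvS]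
      rw [liftGlobal_apply (S := S'), if_neg hne, zero_mul, mul_zero]
    · have hne : ¬ (∀ v : V, v ∉ S → x v = z v) := fun hc => by
        apply hv
        rw [← hc v hvS, hz₀v, if_neg hvS]
      rw [liftGlobal_apply, if_neg hne, zero_mul, zero_mul]
  rw [Fintype.sum_eq_single z₀ hvan]
  have hres1 : res S z₀ = res S y := funext fun v => by
    simp only [res, hz₀v]; rw [if_pos v.2]
  have hres2 : res S' z₀ = res S' x := funext fun v => by
    simp only [res, hz₀v]; rw [if_neg (Finset.disjoint_right.1 h v.2)]
  have hc1 : ∀ v : V, v ∉ S → x v = z₀ v := fun v hv => by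
    rw [hz₀v, if_neg hv]
  have hcond : (∀ v : V, v ∉ S' → z₀ v = y v) ↔ (∀ v : V, v ∉ S → v ∉ S' → x v = y v) := by
    constructor
    · intro hc v hv hv'
      have := hc v hv'
      rwa [hz₀v, if_neg hv] at this
    · intro hc v hv'
      by_cases hvS : v ∈ S
      · rw [hz₀v, if_pos hvS]
      · rw [hz₀v, if_neg hvS]
        exact hc v hvS hv'
  rw [liftGlobal_apply, liftGlobal_apply, if_pos hc1, one_mul, hres1, hres2]
  simp only [hcond]
  ring

lemma commute_liftGlobal_disjoint {S S' : Finset V} (h : Disjoint S S')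
    (A : Matrix (Loc dim S) (Loc dim S) ℂ) (B : Matrix (Loc dim S') (Loc dim S') ℂ) :
    Commute (liftGlobal dim S A) (liftGlobal dim S' B) := by
  show _ = _
  ext x y
  rw [liftGlobal_mul_apply_disjoint h, liftGlobal_mul_apply_disjoint h.symm]
  have hiff : (∀ v : V, v ∉ S → v ∉ S' → x v = y v) ↔ (∀ v : V, v ∉ S' → v ∉ S → x v = y v) :=
    ⟨fun hc v a b => hc v b a, fun hc v a b => hc v b a⟩
  simp only [hiff]
  ring

/-- Splitting a configuration on a disjoint union. -/
def locUnionEquiv {S S' : Finset V} (h : Disjoint S S') :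
    Loc dim (S ∪ S') ≃ Loc dim S × Loc dim S' where
  toFun p := (resL Finset.subset_union_left p, resL Finset.subset_union_right p)
  invFun q := fun v => if hv : ↑v ∈ S then q.1 ⟨↑v, hv⟩
    else q.2 ⟨↑v, (Finset.mem_union.1 v.2).resolve_left hv⟩
  left_inv p := by
    funext v
    by_cases hv : ↑v ∈ S <;> simp [resL, hv]
  right_inv q := by
    obtain ⟨q₁, q₂⟩ := q
    simp only [Prod.mk.injEq]
    constructor
    · funext v
      simp only [resL]
      rw [dif_pos v.2]
    · funext v
      simp only [resL]
      rw [dif_neg (Finset.disjoint_right.1 h v.2)]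

@[simp] lemma resL_locUnionEquiv_symm_fst {S S' : Finset V} (h : Disjoint S S')
    (q : Loc dim S × Loc dim S') :
    resL Finset.subset_union_left ((locUnionEquiv (dim := dim) h).symm q) = q.1 := by
  funext v
  simp only [locUnionEquiv, Equiv.coe_fn_symm_mk, resL]
  rw [dif_pos v.2]

@[simp] lemma resL_locUnionEquiv_symm_snd {S S' : Finset V} (h : Disjoint S S')
    (q : Loc dim S × Loc dim S') :
    resL Finset.subset_union_right ((locUnionEquiv (dim := dim) h).symm q) = q.2 := by
  funext v
  simp only [locUnionEquiv, Equiv.coe_fn_symm_mk, resL]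
  rw [dif_neg (Finset.disjoint_right.1 h v.2)]

lemma sum_loc_union {S S' : Finset V} (h : Disjoint S S')
    (F : Loc dim S → ℂ) (G : Loc dim S' → ℂ) :
    ∑ p : Loc dim (S ∪ S'),
        F (resL Finset.subset_union_left p) * G (resL Finset.subset_union_right p) =
      (∑ w, F w) * (∑ w', G w') := by
  rw [← Equiv.sum_comp (locUnionEquiv (dim := dim) h).symm]
  simp only [resL_locUnionEquiv_symm_fst, resL_locUnionEquiv_symm_snd]
  rw [Fintype.sum_prod_type, Finset.sum_mul_sum]

lemma card_loc_union {S S' : Finset V} (h : Disjoint S S') :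
    Fintype.card (Loc dim (S ∪ S')) = Fintype.card (Loc dim S) * Fintype.card (Loc dim S') := by
  rw [← Fintype.card_prod]
  exact Fintype.card_congr (locUnionEquiv h)

lemma ntrace_mul_disjoint (hdim : ∀ v, 0 < dim v) {S S' : Finset V} (h : Disjoint S S')
    (A : Matrix (Loc dim S) (Loc dim S) ℂ) (B : Matrix (Loc dim S') (Loc dim S') ℂ) :
    ntraceM (liftGlobal dim S A * liftGlobal dim S' B) = ntraceM A * ntraceM B := by
  have key : (liftGlobal dim S A * liftGlobal dim S' B).trace =
      Fintype.card (Loc dim (S ∪ S')ᶜ) • (A.trace * B.trace) := by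
    simp only [Matrix.trace, Matrix.diag, liftGlobal_mul_apply_disjoint h,
      eq_self_iff_true, implies_true, if_true, one_mul]
    exact (sum_res (S ∪ S') fun p : Loc dim (S ∪ S') =>
        A (resL Finset.subset_union_left p) (resL Finset.subset_union_left p) *
        B (resL Finset.subset_union_right p) (resL Finset.subset_union_right p)).trans
      (congrArg _ (sum_loc_union h (fun w => A w w) (fun w => B w w)))
  have h1 : (Fintype.card (Loc dim S) : ℂ) ≠ 0 := Nat.cast_ne_zero.2 (card_loc_pos hdim S).ne'
  have h2 : (Fintype.card (Loc dim S') : ℂ) ≠ 0 := Nat.cast_ne_zero.2 (card_loc_pos hdim S').ne'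
  have h3 : (Fintype.card (Loc dim (S ∪ S')ᶜ) : ℂ) ≠ 0 :=
    Nat.cast_ne_zero.2 (card_loc_pos hdim (S ∪ S')ᶜ).ne'
  unfold ntraceM
  rw [key, card_glob (dim := dim) (S ∪ S'), card_loc_union (dim := dim) h, nsmul_eq_mul]
  rw [show ((Fintype.card (Loc dim S) * Fintype.card (Loc dim S') *
        Fintype.card (Loc dim (S ∪ S')ᶜ) : ℕ) : ℂ) =
      (Fintype.card (Loc dim (S ∪ S')ᶜ) : ℂ) *
        ((Fintype.card (Loc dim S) : ℂ) * (Fintype.card (Loc dim S') : ℂ)) by push_cast; ring]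
  rw [mul_div_mul_left _ _ h3, div_mul_div_comm]

lemma liftGlobal_one (S : Finset V) :
    liftGlobal dim S (1 : Matrix (Loc dim S) (Loc dim S) ℂ) = 1 := by
  ext x y
  rw [liftGlobal_apply, Matrix.one_apply, Matrix.one_apply]
  by_cases hxy : x = y
  · subst hxy
    rw [if_pos (fun v _ => rfl), if_pos rfl, if_pos rfl, one_mul]
  · rw [if_neg hxy]
    obtain ⟨v, hv⟩ := Function.ne_iff.1 hxy
    by_cases hvS : v ∈ S
    · have : res S x ≠ res S y := fun hc => hv (congrFun hc ⟨v, hvS⟩)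
      rw [if_neg this, mul_zero]
    · have : ¬ (∀ v : V, v ∉ S → x v = y v) := fun hc => hv (hc v hvS)
      rw [if_neg this, zero_mul]

lemma liftGlobal_add (S : Finset V) (A B : Matrix (Loc dim S) (Loc dim S) ℂ) :
    liftGlobal dim S (A + B) = liftGlobal dim S A + liftGlobal dim S B := by
  ext x y
  simp only [liftGlobal_apply, Matrix.add_apply]
  ring

lemma liftGlobal_smul (S : Finset V) (c : ℂ) (A : Matrix (Loc dim S) (Loc dim S) ℂ) :
    liftGlobal dim S (c • A) = c • liftGlobal dim S A := by
  ext x y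
  simp only [liftGlobal_apply, Matrix.smul_apply, smul_eq_mul]
  ring

/-- `liftGlobal` as an algebra homomorphism. -/
noncomputable def liftAH (S : Finset V) :
    Matrix (Loc dim S) (Loc dim S) ℂ →ₐ[ℂ] Matrix (Glob dim) (Glob dim) ℂ where
  toFun := liftGlobal dim S
  map_one' := liftGlobal_one S
  map_mul' A B := (liftGlobal_mul S A B).symm
  map_zero' := by
    ext x y
    simp [liftGlobal_apply]
  map_add' := liftGlobal_add S
  commutes' c := by
    show liftGlobal dim S (algebraMap ℂ _ c) = algebraMap ℂ _ c
    rw [Algebra.algebraMap_eq_smul_one, Algebra.algebraMap_eq_smul_one, liftGlobal_smul,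
      liftGlobal_one]

lemma exp_liftGlobal (S : Finset V) (A : Matrix (Loc dim S) (Loc dim S) ℂ) :
    NormedSpace.exp (liftGlobal dim S A) = liftGlobal dim S (NormedSpace.exp A) := by
  letI : NormedRing (Matrix (Loc dim S) (Loc dim S) ℂ) := Matrix.linftyOpNormedRing
  letI : NormedAlgebra ℂ (Matrix (Loc dim S) (Loc dim S) ℂ) := Matrix.linftyOpNormedAlgebra
  letI : NormedRing (Matrix (Glob dim) (Glob dim) ℂ) := Matrix.linftyOpNormedRing
  letI : NormedAlgebra ℂ (Matrix (Glob dim) (Glob dim) ℂ) := Matrix.linftyOpNormedAlgebra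
  letI : NormedAlgebra ℚ (Matrix (Loc dim S) (Loc dim S) ℂ) :=
    NormedAlgebra.restrictScalars ℚ ℂ _
  have hc : Continuous (liftAH (dim := dim) S) :=
    LinearMap.continuous_of_finiteDimensional (liftAH (dim := dim) S).toLinearMap
  exact (NormedSpace.map_exp (liftAH (dim := dim) S) hc A).symm

lemma exp_zero_matrix {n : Type*} [Fintype n] [DecidableEq n] :
    NormedSpace.exp (0 : Matrix n n ℂ) = 1 := by
  letI : NormedRing (Matrix n n ℂ) := Matrix.linftyOpNormedRing
  letI : NormedAlgebra ℂ (Matrix n n ℂ) := Matrix.linftyOpNormedAlgebra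
  exact NormedSpace.exp_zero

lemma ntraceM_one {n : Type*} [Fintype n] [DecidableEq n] [Nonempty n] :
    ntraceM (1 : Matrix n n ℂ) = 1 := by
  unfold ntraceM
  rw [Matrix.trace_one]
  exact div_self (Nat.cast_ne_zero.2 Fintype.card_ne_zero)

end Infra2


/-! ### Combinatorics of connected components -/

section Components

variable [DecidableEq V] (edge : Eg → Finset V)

/-- The chain relation within a subgraph. -/
def rel (S : Finset Eg) (x y : Eg) : Prop :=
  x ∈ S ∧ y ∈ S ∧ (edge x ∩ edge y).Nonempty

/-- Reachability within a subgraph. -/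
def reach (S : Finset Eg) : Eg → Eg → Prop := Relation.ReflTransGen (rel edge S)

lemma rel_symm {S : Finset Eg} {x y : Eg} (h : rel edge S x y) : rel edge S y x :=
  ⟨h.2.1, h.1, by rw [Finset.inter_comm]; exact h.2.2⟩

lemma reach_symm {S : Finset Eg} {x y : Eg} (h : reach edge S x y) : reach edge S y x :=
  @Std.Symm.symm _ _ (@Relation.ReflTransGen.symmetric _ _ ⟨fun _ _ hh => rel_symm edge hh⟩) _ _ h

lemma reach_mono {S S' : Finset Eg} (hS : S ⊆ S') {x y : Eg} (h : reach edge S x y) :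
    reach edge S' x y :=
  Relation.ReflTransGen.mono (r := rel edge S) (p := rel edge S')
    (by intro _ _ hh; exact ⟨hS hh.1, hS hh.2.1, hh.2.2⟩) x y h

lemma reach_mem_right {S : Finset Eg} {x y : Eg} (hx : x ∈ S) (h : reach edge S x y) :
    y ∈ S := by
  induction h with
  | refl => exact hx
  | tail _ h2 _ => exact h2.2.1

/-- The connected component of `e` in the subgraph determined by `S`. -/
noncomputable def compOf (S : Finset Eg) (e : Eg) : Finset Eg :=
  S.filter (fun b => reach edge S e b)

lemma mem_compOf {S : Finset Eg} {e b : Eg} :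
    b ∈ compOf edge S e ↔ b ∈ S ∧ reach edge S e b := Finset.mem_filter

lemma self_mem_compOf {S : Finset Eg} {e : Eg} (he : e ∈ S) : e ∈ compOf edge S e :=
  (mem_compOf edge).2 ⟨he, Relation.ReflTransGen.refl⟩

lemma compOf_subset {S : Finset Eg} {e : Eg} : compOf edge S e ⊆ S := Finset.filter_subset _ _

lemma reach_in_compOf {S : Finset Eg} {e a b : Eg} (ha : reach edge S e a)
    (hab : reach edge S a b) :
    Relation.ReflTransGen (rel edge (compOf edge S e)) a b := by
  induction hab with
  | refl => exact Relation.ReflTransGen.refl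
  | tail h1 h2 ih =>
      refine ih.tail ⟨?_, ?_, h2.2.2⟩
      · exact (mem_compOf edge).2 ⟨h2.1, ha.trans h1⟩
      · exact (mem_compOf edge).2 ⟨h2.2.1, (ha.trans h1).tail h2⟩

lemma connectedSub_compOf {S : Finset Eg} {e : Eg} (he : e ∈ S) :
    ConnectedSub edge (compOf edge S e) := by
  refine ⟨⟨e, self_mem_compOf edge he⟩, fun a ha b hb => ?_⟩
  have hea := ((mem_compOf edge).1 ha).2
  have heb := ((mem_compOf edge).1 hb).2
  exact reach_in_compOf edge hea ((reach_symm edge hea).trans heb)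

lemma connectedSub_reach {T : Finset Eg} (hT : ConnectedSub edge T) {a b : Eg}
    (ha : a ∈ T) (hb : b ∈ T) {S : Finset Eg} (hTS : T ⊆ S) : reach edge S a b :=
  reach_mono edge hTS (hT.2 a ha b hb)

lemma isComponent_compOf {S : Finset Eg} {e : Eg} (he : e ∈ S) :
    IsComponent edge S (compOf edge S e) := by
  refine ⟨compOf_subset edge, connectedSub_compOf edge he, fun T' hsub hT'S hT' => ?_⟩
  refine Finset.Subset.antisymm (fun b hb => ?_) hsub
  have he' : e ∈ T' := hsub (self_mem_compOf edge he)
  exact (mem_compOf edge).2 ⟨hT'S hb, connectedSub_reach edge hT' he' hb hT'S⟩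

lemma component_eq_compOf {S T : Finset Eg} (hT : IsComponent edge S T) {e : Eg}
    (he : e ∈ T) : T = compOf edge S e := by
  have hsub : T ⊆ compOf edge S e := fun b hb =>
    (mem_compOf edge).2 ⟨hT.1 hb, connectedSub_reach edge hT.2.1 he hb hT.1⟩
  exact ((hT.2.2 _ hsub (compOf_subset edge) (connectedSub_compOf edge (hT.1 he)))).symm

lemma mem_comp_iff [Fintype Eg] {S T : Finset Eg} :
    T ∈ comp edge S ↔ IsComponent edge S T := by
  simp [comp]

lemma comp_nonempty_mem [Fintype Eg] {S T : Finset Eg} (hT : T ∈ comp edge S) : T.Nonempty :=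
  ((mem_comp_iff edge).1 hT).2.1.1

/-- A connected subgraph of `S` meeting a component is contained in it. -/
lemma connected_subset_component [Fintype Eg] {S T' γ : Finset Eg} (hγ : γ ∈ comp edge S)
    (hT'S : T' ⊆ S) (hT' : ConnectedSub edge T') {f : Eg} (hf1 : f ∈ T') (hf2 : f ∈ γ) :
    T' ⊆ γ := by
  have hγc := (mem_comp_iff edge).1 hγ
  rw [component_eq_compOf edge hγc hf2]
  intro b hb
  exact (mem_compOf edge).2 ⟨hT'S hb, connectedSub_reach edge hT' hf1 hb hT'S⟩

lemma comp_disjoint [Fintype Eg] {S γ γ' : Finset Eg} (hγ : γ ∈ comp edge S)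
    (hγ' : γ' ∈ comp edge S) (hne : γ ≠ γ') : Disjoint γ γ' := by
  rw [Finset.disjoint_left]
  intro e he he'
  exact hne ((component_eq_compOf edge ((mem_comp_iff edge).1 hγ) he).trans
    (component_eq_compOf edge ((mem_comp_iff edge).1 hγ') he').symm)

lemma vertex_disjoint_compOf {S : Finset Eg} {e : Eg} (he : e ∈ S) :
    Disjoint (vertexSet edge (compOf edge S e)) (vertexSet edge (S \ compOf edge S e)) := by
  rw [Finset.disjoint_left]
  intro v hv hv'
  obtain ⟨a, ha, hva⟩ := Finset.mem_biUnion.1 hv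
  obtain ⟨b, hb, hvb⟩ := Finset.mem_biUnion.1 hv'
  obtain ⟨hbS, hbγ⟩ := Finset.mem_sdiff.1 hb
  apply hbγ
  have hrel : rel edge S a b :=
    ⟨((mem_compOf edge).1 ha).1, hbS, ⟨v, Finset.mem_inter.2 ⟨hva, hvb⟩⟩⟩
  exact (mem_compOf edge).2 ⟨hbS, ((mem_compOf edge).1 ha).2.tail hrel⟩

lemma compOf_not_mem_comp_sdiff [Fintype Eg] {S : Finset Eg} {e : Eg} (he : e ∈ S) :
    compOf edge S e ∉ comp edge (S \ compOf edge S e) := by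
  intro hmem
  have := ((mem_comp_iff edge).1 hmem).1 (self_mem_compOf edge he)
  exact (Finset.mem_sdiff.1 this).2 (self_mem_compOf edge he)

lemma comp_sdiff [Fintype Eg] {S : Finset Eg} {e : Eg} (he : e ∈ S) :
    comp edge (S \ compOf edge S e) = (comp edge S).erase (compOf edge S e) := by
  set γ := compOf edge S e with hγdef
  have hγ : γ ∈ comp edge S := (mem_comp_iff edge).2 (isComponent_compOf edge he)
  ext T
  rw [Finset.mem_erase, mem_comp_iff, mem_comp_iff]
  constructor
  · rintro ⟨hTsub, hTconn, hTmax⟩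
    have hTS : T ⊆ S := hTsub.trans (Finset.sdiff_subset)
    have hTne : T ≠ γ := by
      intro hEq
      have : e ∈ T := hEq ▸ self_mem_compOf edge he
      exact (Finset.mem_sdiff.1 (hTsub this)).2 (hEq ▸ this)
    refine ⟨hTne, hTS, hTconn, fun T' hTT' hT'S hT' => ?_⟩
    have hT'γ : T' ⊆ S \ γ := by
      intro b hb
      rw [Finset.mem_sdiff]
      refine ⟨hT'S hb, fun hbγ => ?_⟩
      have : T' ⊆ γ := connected_subset_component edge hγ hT'S hT' hb hbγ
      obtain ⟨g, hg⟩ := hTconn.1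
      exact (Finset.mem_sdiff.1 (hTsub hg)).2 (this (hTT' hg))
    exact hTmax T' hTT' hT'γ hT'
  · rintro ⟨hTne, hTsub, hTconn, hTmax⟩
    have hdisj : Disjoint T γ := comp_disjoint edge ((mem_comp_iff edge).2
      ⟨hTsub, hTconn, hTmax⟩) hγ hTne
    have hTsd : T ⊆ S \ γ := fun b hb =>
      Finset.mem_sdiff.2 ⟨hTsub hb, fun hbγ => (Finset.disjoint_left.1 hdisj) hb hbγ⟩
    refine ⟨hTsd, hTconn, fun T' hTT' hT'S hT' => ?_⟩
    exact hTmax T' hTT' (hT'S.trans (Finset.sdiff_subset)) hT'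

lemma comp_insert [Fintype Eg] {S : Finset Eg} {e : Eg} (he : e ∈ S) :
    comp edge S = insert (compOf edge S e) (comp edge (S \ compOf edge S e)) := by
  rw [comp_sdiff edge he, Finset.insert_erase]
  exact (mem_comp_iff edge).2 (isComponent_compOf edge he)

lemma comp_empty [Fintype Eg] : comp edge (∅ : Finset Eg) = ∅ := by
  ext T
  simp only [mem_comp_iff, Finset.notMem_empty, iff_false]
  rintro ⟨hsub, ⟨⟨g, hg⟩, -⟩, -⟩
  exact Finset.notMem_empty g (hsub hg)

end Components


/-! ### Partition functions and polymer weights -/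

section Polymer

variable [DecidableEq V] [Fintype V] [Fintype Eg]
variable (edge : Eg → Finset V) (dim : V → ℕ)
  (Φ : ∀ e : Eg, Matrix (Loc dim (edge e)) (Loc dim (edge e)) ℂ) (β : ℂ)

/-- The (normalized) partition function of the subsystem with edges `T`. -/
noncomputable def ZZ (T : Finset Eg) : ℂ :=
  ntraceM (NormedSpace.exp ((-β) • ∑ e ∈ T, liftGlobal dim (edge e) (Φ e)))

/-- The Möbius transform of `ZZ`. -/
noncomputable def AA (S : Finset Eg) : ℂ :=
  (-1 : ℂ) ^ S.card * ∑ T ∈ S.powerset, (-1 : ℂ) ^ T.card * ZZ edge dim Φ β T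

lemma liftGlobal_liftMat {S W : Finset V} (h : S ⊆ W) (A : Matrix (Loc dim S) (Loc dim S) ℂ) :
    liftGlobal dim W (liftMat h A) = liftGlobal dim S A := by
  ext x y
  simp only [liftGlobal, liftMat]
  by_cases hP : ∀ v : V, v ∉ S → x v = y v
  · have hW : ∀ v : V, v ∉ W → x v = y v := fun v hv => hP v (fun hvS => hv (h hvS))
    have hWS : ∀ v : (W : Finset V), ↑v ∉ S → x ↑v = y ↑v := fun v hv => hP ↑v hv
    rw [if_pos hP, if_pos hW, if_pos hWS]
    ring
  · rw [if_neg hP]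
    push_neg at hP
    obtain ⟨v, hvS, hvne⟩ := hP
    by_cases hvW : v ∈ W
    · have hcc : ¬ (∀ v : (W : Finset V), ↑v ∉ S → x ↑v = y ↑v) := fun hc =>
        hvne (hc ⟨v, hvW⟩ hvS)
      rw [if_neg hcc]
      ring
    · have hcc : ¬ (∀ v : V, v ∉ W → x v = y v) := fun hc => hvne (hc v hvW)
      rw [if_neg hcc]
      ring

lemma ham_eq {T γ : Finset Eg} (hT : T ⊆ γ) :
    ∑ e ∈ T, liftGlobal dim (edge e) (Φ e) =
      liftGlobal dim (vertexSet edge γ)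
        (∑ e ∈ T, if he : e ∈ γ then
            liftMat (Finset.subset_biUnion_of_mem edge he) (Φ e)
          else (0 : Matrix (Loc dim (vertexSet edge γ)) (Loc dim (vertexSet edge γ)) ℂ)) := by
  calc ∑ e ∈ T, liftGlobal dim (edge e) (Φ e)
      = ∑ e ∈ T, liftGlobal dim (vertexSet edge γ)
          (if he : e ∈ γ then liftMat (Finset.subset_biUnion_of_mem edge he) (Φ e)
            else 0) := by
        refine Finset.sum_congr rfl fun e he => ?_
        rw [dif_pos (hT he), liftGlobal_liftMat]
    _ = _ := (map_sum (liftAH (dim := dim) (vertexSet edge γ)) _ T).symm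

lemma ZZ_eq_local {T γ : Finset Eg} (hT : T ⊆ γ) (hdim : ∀ v, 0 < dim v) :
    ntraceM (NormedSpace.exp
        ((-β) • ∑ e ∈ T,
          (if he : e ∈ γ then
            liftMat (Finset.subset_biUnion_of_mem edge he) (Φ e)
          else 0 :
            Matrix (Loc dim (vertexSet edge γ)) (Loc dim (vertexSet edge γ)) ℂ))) =
      ZZ edge dim Φ β T := by
  unfold ZZ
  rw [ham_eq edge dim Φ hT, ← liftGlobal_smul, exp_liftGlobal, ntrace_liftGlobal hdim]

lemma weight_eq_AA (hdim : ∀ v, 0 < dim v) (γ : Finset Eg) :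
    weight edge dim Φ β γ = AA edge dim Φ β γ := by
  unfold weight AA
  congr 1
  refine Finset.sum_congr rfl fun T hT => ?_
  rw [ZZ_eq_local edge dim Φ β (Finset.mem_powerset.1 hT) hdim]

lemma ZZ_empty (hdim : ∀ v, 0 < dim v) : ZZ edge dim Φ β (∅ : Finset Eg) = 1 := by
  haveI : Nonempty (Glob dim) := ⟨fun v => ⟨0, hdim v⟩⟩
  unfold ZZ
  rw [Finset.sum_empty, smul_zero, exp_zero_matrix]
  exact ntraceM_one

lemma AA_empty (hdim : ∀ v, 0 < dim v) : AA edge dim Φ β (∅ : Finset Eg) = 1 := by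
  unfold AA
  simp [ZZ_empty edge dim Φ β hdim]

lemma ZZ_union (hdim : ∀ v, 0 < dim v) {T₁ T₂ : Finset Eg}
    (hd : Disjoint (vertexSet edge T₁) (vertexSet edge T₂)) (hT : Disjoint T₁ T₂) :
    ZZ edge dim Φ β (T₁ ∪ T₂) = ZZ edge dim Φ β T₁ * ZZ edge dim Φ β T₂ := by
  unfold ZZ
  rw [Finset.sum_union hT, ham_eq edge dim Φ (le_refl T₁), ham_eq edge dim Φ (le_refl T₂),
    smul_add, ← liftGlobal_smul, ← liftGlobal_smul,
    Matrix.exp_add_of_commute _ _ (commute_liftGlobal_disjoint hd _ _),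
    exp_liftGlobal, exp_liftGlobal, ntrace_mul_disjoint hdim hd,
    ntrace_liftGlobal hdim, ntrace_liftGlobal hdim]

lemma sum_powerset_union' {α : Type*} [DecidableEq α] {s t : Finset α} (h : Disjoint s t)
    (f : Finset α → ℂ) :
    ∑ u ∈ (s ∪ t).powerset, f u = ∑ u₁ ∈ s.powerset, ∑ u₂ ∈ t.powerset, f (u₁ ∪ u₂) := by
  rw [← Finset.sum_product' s.powerset t.powerset (fun u₁ u₂ => f (u₁ ∪ u₂))]
  refine Finset.sum_nbij' (fun u => (u ∩ s, u ∩ t)) (fun p => p.1 ∪ p.2) ?_ ?_ ?_ ?_ ?_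
  · intro u hu
    rw [Finset.mem_product, Finset.mem_powerset, Finset.mem_powerset]
    exact ⟨Finset.inter_subset_right, Finset.inter_subset_right⟩
  · intro p hp
    rw [Finset.mem_product, Finset.mem_powerset, Finset.mem_powerset] at hp
    exact Finset.mem_powerset.2 (Finset.union_subset_union hp.1 hp.2)
  · intro u hu
    dsimp only
    rw [← Finset.inter_union_distrib_left]
    exact Finset.inter_eq_left.2 (Finset.mem_powerset.1 hu)
  · intro p hp
    rw [Finset.mem_product, Finset.mem_powerset, Finset.mem_powerset] at hp
    have h1 : (p.1 ∪ p.2) ∩ s = p.1 := by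
      rw [Finset.union_inter_distrib_right, Finset.inter_eq_left.2 hp.1,
        Finset.disjoint_iff_inter_eq_empty.1 (Disjoint.mono_left hp.2 h.symm),
        Finset.union_empty]
    have h2 : (p.1 ∪ p.2) ∩ t = p.2 := by
      rw [Finset.union_inter_distrib_right, Finset.inter_eq_left.2 hp.2,
        Finset.disjoint_iff_inter_eq_empty.1 (Disjoint.mono_left hp.1 h),
        Finset.empty_union]
    rw [h1, h2]
  · intro u hu
    dsimp only
    rw [← Finset.inter_union_distrib_left, Finset.inter_eq_left.2 (Finset.mem_powerset.1 hu)]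

lemma AA_union (hdim : ∀ v, 0 < dim v) {T₁ T₂ : Finset Eg}
    (hd : Disjoint (vertexSet edge T₁) (vertexSet edge T₂)) (hT : Disjoint T₁ T₂) :
    AA edge dim Φ β (T₁ ∪ T₂) = AA edge dim Φ β T₁ * AA edge dim Φ β T₂ := by
  unfold AA
  rw [sum_powerset_union' hT, Finset.card_union_of_disjoint hT, pow_add]
  rw [show (∑ u₁ ∈ T₁.powerset, ∑ u₂ ∈ T₂.powerset,
        (-1 : ℂ) ^ (u₁ ∪ u₂).card * ZZ edge dim Φ β (u₁ ∪ u₂)) =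
      ∑ u₁ ∈ T₁.powerset, ∑ u₂ ∈ T₂.powerset,
        ((-1 : ℂ) ^ u₁.card * ZZ edge dim Φ β u₁) *
          ((-1 : ℂ) ^ u₂.card * ZZ edge dim Φ β u₂) from
    Finset.sum_congr rfl fun u₁ h₁ => Finset.sum_congr rfl fun u₂ h₂ => by
      have hu₁ := Finset.mem_powerset.1 h₁
      have hu₂ := Finset.mem_powerset.1 h₂
      have hdu : Disjoint u₁ u₂ := hT.mono hu₁ hu₂
      rw [Finset.card_union_of_disjoint hdu, pow_add,
        ZZ_union edge dim Φ β hdim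
          (hd.mono (Finset.biUnion_subset_biUnion_of_subset_left _ hu₁)
            (Finset.biUnion_subset_biUnion_of_subset_left _ hu₂)) hdu]
      ring]
  rw [← Finset.sum_mul_sum]
  ring

lemma AA_eq_prod (hdim : ∀ v, 0 < dim v) (S : Finset Eg) :
    AA edge dim Φ β S = ∏ γ ∈ comp edge S, AA edge dim Φ β γ := by
  induction S using Finset.strongInduction with
  | _ S ih =>
    rcases Finset.eq_empty_or_nonempty S with rfl | ⟨e, he⟩
    · rw [comp_empty, Finset.prod_empty, AA_empty edge dim Φ β hdim]
    · have hγS : compOf edge S e ⊆ S := compOf_subset edge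
      have hvd := vertex_disjoint_compOf edge he
      have hed : Disjoint (compOf edge S e) (S \ compOf edge S e) := Finset.disjoint_sdiff
      have hun : compOf edge S e ∪ (S \ compOf edge S e) = S :=
        Finset.union_sdiff_of_subset hγS
      have hss : S \ compOf edge S e ⊂ S := by
        refine Finset.sdiff_ssubset hγS ⟨e, self_mem_compOf edge he⟩
      calc AA edge dim Φ β S = AA edge dim Φ β (compOf edge S e ∪ (S \ compOf edge S e)) := by
            rw [hun]
        _ = AA edge dim Φ β (compOf edge S e) * AA edge dim Φ β (S \ compOf edge S e) :=
            AA_union edge dim Φ β hdim hvd hed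
        _ = AA edge dim Φ β (compOf edge S e) *
              ∏ γ ∈ comp edge (S \ compOf edge S e), AA edge dim Φ β γ := by
            rw [ih _ hss]
        _ = ∏ γ ∈ comp edge S, AA edge dim Φ β γ := by
            rw [comp_insert edge he,
              Finset.prod_insert (compOf_not_mem_comp_sdiff edge he)]

lemma sum_AA (hdim : ∀ v, 0 < dim v) :
    ∑ S : Finset Eg, AA edge dim Φ β S = ZZ edge dim Φ β Finset.univ := by
  have inner : ∀ T : Finset Eg,
      (∑ S ∈ Finset.univ.filter (fun S => T ⊆ S),
        (-1 : ℂ) ^ S.card * ((-1 : ℂ) ^ T.card * ZZ edge dim Φ β T)) =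
      (if Tᶜ = ∅ then 1 else 0) * ZZ edge dim Φ β T := by
    intro T
    have hstep : (∑ S ∈ Finset.univ.filter (fun S => T ⊆ S),
        (-1 : ℂ) ^ S.card * ((-1 : ℂ) ^ T.card * ZZ edge dim Φ β T)) =
        ∑ R ∈ Tᶜ.powerset,
          (-1 : ℂ) ^ (T ∪ R).card * ((-1 : ℂ) ^ T.card * ZZ edge dim Φ β T) := by
      refine Finset.sum_nbij' (fun S => S \ T) (fun R => T ∪ R) ?_ ?_ ?_ ?_ ?_
      · intro S hS
        rw [Finset.mem_powerset]
        intro v hv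
        exact Finset.mem_compl.2 (Finset.mem_sdiff.1 hv).2
      · intro R hR
        simp
      · intro S hS
        exact Finset.union_sdiff_of_subset (Finset.mem_filter.1 hS).2
      · intro R hR
        have hdisj : Disjoint T R := by
          rw [Finset.disjoint_left]
          intro a ha ha'
          exact Finset.mem_compl.1 (Finset.mem_powerset.1 hR ha') ha
        rw [Finset.union_sdiff_cancel_left hdisj]
      · intro S hS
        rw [Finset.union_sdiff_of_subset (Finset.mem_filter.1 hS).2]
    rw [hstep]
    have hcards : ∀ R ∈ Tᶜ.powerset,
        (-1 : ℂ) ^ (T ∪ R).card * ((-1 : ℂ) ^ T.card * ZZ edge dim Φ β T) =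
        (-1 : ℂ) ^ R.card * ZZ edge dim Φ β T := by
      intro R hR
      have hdisj : Disjoint T R := by
        rw [Finset.disjoint_left]
        intro a ha ha'
        exact Finset.mem_compl.1 (Finset.mem_powerset.1 hR ha') ha
      rw [Finset.card_union_of_disjoint hdisj, pow_add]
      have : (-1 : ℂ) ^ T.card * (-1 : ℂ) ^ T.card = 1 := by
        rw [← pow_add]
        exact Even.neg_one_pow ⟨T.card, by ring⟩
      calc (-1 : ℂ) ^ T.card * (-1 : ℂ) ^ R.card * ((-1 : ℂ) ^ T.card * ZZ edge dim Φ β T)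
          = ((-1 : ℂ) ^ T.card * (-1 : ℂ) ^ T.card) * ((-1 : ℂ) ^ R.card * ZZ edge dim Φ β T) :=
            by ring
        _ = (-1 : ℂ) ^ R.card * ZZ edge dim Φ β T := by rw [this, one_mul]
    rw [Finset.sum_congr rfl hcards, ← Finset.sum_mul]
    congr 1
    calc (∑ R ∈ Tᶜ.powerset, (-1 : ℂ) ^ R.card)
        = ((∑ R ∈ Tᶜ.powerset, (-1 : ℤ) ^ R.card : ℤ) : ℂ) := by push_cast; rfl
      _ = _ := by
          rw [Finset.sum_powerset_neg_one_pow_card]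
          split_ifs <;> simp
  have huniv : ∀ T : Finset Eg, (if Tᶜ = ∅ then (1 : ℂ) else 0) * ZZ edge dim Φ β T =
      if T = Finset.univ then ZZ edge dim Φ β T else 0 := by
    intro T
    by_cases hT : T = Finset.univ
    · rw [if_pos ((Finset.compl_eq_empty_iff T).2 hT), if_pos hT, one_mul]
    · rw [if_neg (fun hc => hT ((Finset.compl_eq_empty_iff T).1 hc)), if_neg hT, zero_mul]
  calc ∑ S : Finset Eg, AA edge dim Φ β S
      = ∑ S ∈ (Finset.univ : Finset (Finset Eg)), ∑ T ∈ S.powerset,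
          (-1 : ℂ) ^ S.card * ((-1 : ℂ) ^ T.card * ZZ edge dim Φ β T) :=
        Finset.sum_congr rfl fun S _ => by unfold AA; exact Finset.mul_sum _ _ _
    _ = ∑ T ∈ (Finset.univ : Finset (Finset Eg)),
          ∑ S ∈ Finset.univ.filter (fun S => T ⊆ S),
          (-1 : ℂ) ^ S.card * ((-1 : ℂ) ^ T.card * ZZ edge dim Φ β T) :=
        Finset.sum_comm' (by intro S T; simp [Finset.mem_powerset])
    _ = ∑ T ∈ (Finset.univ : Finset (Finset Eg)),
          (if Tᶜ = ∅ then (1 : ℂ) else 0) * ZZ edge dim Φ β T :=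
        Finset.sum_congr rfl fun T _ => inner T
    _ = ∑ T ∈ (Finset.univ : Finset (Finset Eg)),
          (if T = Finset.univ then ZZ edge dim Φ β T else 0) :=
        Finset.sum_congr rfl fun T _ => huniv T
    _ = ZZ edge dim Φ β Finset.univ := by simp

end Polymer

/-- **Lemma 9 of the paper.** The quantum partition function
`Z_G(β) = tr[e^{−β H_G}]`, `H_G = Σ_{ε∈E} Φ(ε)`, admits the abstract polymer model
representation `Z_G(β) = Σ_{S ⊆ E} Π_{γ ∈ comp(S)} w_γ`. -/
theorem partition_function_polymer_representation
    [DecidableEq V] [Fintype V] [Fintype Eg]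
    (edge : Eg → Finset V) (hne : ∀ e : Eg, (edge e).Nonempty)
    (dim : V → ℕ) (hdim : ∀ v, 0 < dim v)
    (Φ : ∀ e : Eg, Matrix (Loc dim (edge e)) (Loc dim (edge e)) ℂ)
    (hherm : ∀ e : Eg, (Φ e)ᴴ = Φ e)
    (β : ℂ) :
    ntraceM (NormedSpace.exp
        ((-β) • ∑ e : Eg, liftGlobal dim (edge e) (Φ e))) =
      ∑ S : Finset Eg, ∏ γ ∈ comp edge S, weight edge dim Φ β γ := by
  have h1 : ∀ S : Finset Eg, ∏ γ ∈ comp edge S, weight edge dim Φ β γ = AA edge dim Φ β S :=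
    fun S => by
      rw [AA_eq_prod edge dim Φ β hdim S]
      exact Finset.prod_congr rfl fun γ _ => weight_eq_AA edge dim Φ β hdim γ
  calc ntraceM (NormedSpace.exp
        ((-β) • ∑ e : Eg, liftGlobal dim (edge e) (Φ e)))
      = ZZ edge dim Φ β Finset.univ := rfl
    _ = ∑ S : Finset Eg, AA edge dim Φ β S := (sum_AA edge dim Φ β hdim).symm
    _ = ∑ S : Finset Eg, ∏ γ ∈ comp edge S, weight edge dim Φ β γ :=
        Finset.sum_congr rfl fun S _ => (h1 S).symm

end Stmt14
end

section
/- Let n ≥ 1, let A_1, …, A_n be (not necessarily self-adjoint) operators on a finite-dimensional complex Hilbert space with operator norms ‖A_i‖ ≤ 1 for all i, and let β ∈ ℂ. Then ‖ Σ_{T ⊆ {1,…,n}} (−1)^{|T|} exp(−β Σ_{i∈T} A_i) ‖ ≤ (e^{|β|} − 1)^n. -/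
open Finset in
lemma pow_sum_piFinset {R : Type*} [Semiring R] {ι : Type*} [Fintype ι] [DecidableEq ι]
    (T : Finset ι) (f : ι → R) :
    ∀ m : ℕ, (∑ i ∈ T, f i) ^ m =
      ∑ ρ ∈ Fintype.piFinset (fun _ : Fin m => T), (List.ofFn (fun k => f (ρ k))).prod
  | 0 => by simp
  | (m+1) => by
    rw [pow_succ', pow_sum_piFinset T f m, Finset.sum_mul_sum, ← Finset.sum_product']
    refine Finset.sum_nbij' (fun p => Fin.cons p.1 p.2) (fun ρ => (ρ 0, Fin.tail ρ)) ?_ ?_ ?_ ?_ ?_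
    · rintro ⟨a, ρ⟩ hp
      simp only [Finset.mem_product, Fintype.mem_piFinset] at hp ⊢
      intro k
      refine Fin.cases ?_ ?_ k
      · simpa using hp.1
      · intro j; simpa using hp.2 j
    · intro ρ hρ
      simp only [Fintype.mem_piFinset, Finset.mem_product] at hρ ⊢
      exact ⟨hρ 0, fun j => hρ j.succ⟩
    · rintro ⟨a, ρ⟩ _; simp [Fin.tail_cons]
    · intro ρ _; simp [Fin.cons_self_tail]
    · rintro ⟨a, ρ⟩ _
      rw [List.ofFn_succ]
      simp [Fin.cons_zero, Fin.cons_succ]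

lemma sum_superset_neg_one_pow {𝕜 : Type*} [Ring 𝕜] {ι : Type*} [Fintype ι] [DecidableEq ι]
    (S : Finset ι) :
    ∑ T ∈ Finset.univ.filter (fun T : Finset ι => S ⊆ T), (-1:𝕜) ^ T.card
      = if S = Finset.univ then (-1) ^ (Fintype.card ι) else 0 := by
  have hre : ∑ T ∈ Finset.univ.filter (fun T : Finset ι => S ⊆ T), (-1:𝕜) ^ T.card
      = ∑ U ∈ Sᶜ.powerset, (-1:𝕜) ^ (S.card + U.card) := by
    refine Finset.sum_nbij' (fun T => T \ S) (fun U => S ∪ U) ?_ ?_ ?_ ?_ ?_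
    · intro T hT
      simp only [Finset.mem_filter, Finset.mem_univ, true_and] at hT
      simp only [Finset.mem_powerset]
      intro x hx
      simp only [Finset.mem_sdiff] at hx
      simp [Finset.mem_compl, hx.2]
    · intro U hU
      simp only [Finset.mem_filter, Finset.mem_univ, true_and]
      exact Finset.subset_union_left
    · intro T hT
      simp only [Finset.mem_filter, Finset.mem_univ, true_and] at hT
      exact Finset.union_sdiff_of_subset hT
    · intro U hU
      simp only [Finset.mem_powerset] at hU
      rw [Finset.union_sdiff_cancel_left]
      rw [Finset.disjoint_left]
      intro a ha hU'
      exact (Finset.mem_compl.1 (hU hU')) ha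
    · intro T hT
      simp only [Finset.mem_filter, Finset.mem_univ, true_and] at hT
      rw [Finset.card_sdiff_of_subset hT]
      congr 1
      have := Finset.card_le_card hT
      omega
  rw [hre]
  have : ∑ U ∈ Sᶜ.powerset, (-1:𝕜) ^ (S.card + U.card)
      = (-1:𝕜) ^ S.card * ∑ U ∈ Sᶜ.powerset, (-1:𝕜) ^ U.card := by
    rw [Finset.mul_sum]
    exact Finset.sum_congr rfl fun U _ => by rw [pow_add]
  rw [this]
  have hz : (∑ U ∈ Sᶜ.powerset, (-1:𝕜) ^ U.card)
      = ((∑ U ∈ Sᶜ.powerset, (-1:ℤ) ^ U.card : ℤ) : 𝕜) := by push_cast; ring_nf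
  rw [hz, Finset.sum_powerset_neg_one_pow_card]
  by_cases h : S = Finset.univ
  · have hc : Sᶜ = ∅ := (Finset.compl_eq_empty_iff S).2 h
    simp [h, hc, Finset.card_univ]
  · have hc : Sᶜ ≠ ∅ := fun hh => h ((Finset.compl_eq_empty_iff S).1 hh)
    simp [h, hc]

lemma key_incl_excl {𝕜 : Type*} [CommRing 𝕜] {R : Type*} [Ring R] [Algebra 𝕜 R]
    (n m : ℕ) (f : Fin n → R) :
    ∑ T : Finset (Fin n), ((-1:𝕜) ^ T.card) • (∑ i ∈ T, f i) ^ m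
      = ((-1:𝕜) ^ n) • ∑ ρ ∈ Finset.univ.filter
          (fun ρ : Fin m → Fin n => Finset.image ρ Finset.univ = Finset.univ),
          (List.ofFn (fun k => f (ρ k))).prod := by
  have hpi : ∀ T : Finset (Fin n), Fintype.piFinset (fun _ : Fin m => T)
      = Finset.univ.filter (fun ρ : Fin m → Fin n => Finset.image ρ Finset.univ ⊆ T) := by
    intro T
    ext ρ
    simp [Fintype.mem_piFinset, Finset.image_subset_iff]
  calc
    ∑ T : Finset (Fin n), ((-1:𝕜) ^ T.card) • (∑ i ∈ T, f i) ^ m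
        = ∑ T : Finset (Fin n), ∑ ρ : Fin m → Fin n,
            if Finset.image ρ Finset.univ ⊆ T then
              ((-1:𝕜) ^ T.card) • (List.ofFn (fun k => f (ρ k))).prod else 0 := by
          refine Finset.sum_congr rfl fun T _ => ?_
          rw [pow_sum_piFinset T f m, hpi T, Finset.smul_sum, Finset.sum_filter]
    _ = ∑ ρ : Fin m → Fin n, ∑ T : Finset (Fin n),
            if Finset.image ρ Finset.univ ⊆ T then
              ((-1:𝕜) ^ T.card) • (List.ofFn (fun k => f (ρ k))).prod else 0 :=
          Finset.sum_comm
    _ = ∑ ρ : Fin m → Fin n,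
          (if Finset.image ρ Finset.univ = Finset.univ then ((-1:𝕜) ^ n) else 0) •
            (List.ofFn (fun k => f (ρ k))).prod := by
          refine Finset.sum_congr rfl fun ρ _ => ?_
          have hs := sum_superset_neg_one_pow (𝕜 := 𝕜) (Finset.image ρ Finset.univ)
          rw [Fintype.card_fin] at hs
          rw [← hs, Finset.sum_filter, Finset.sum_smul]
          exact Finset.sum_congr rfl fun T _ => by split <;> simp
    _ = ((-1:𝕜) ^ n) • ∑ ρ ∈ Finset.univ.filter
          (fun ρ : Fin m → Fin n => Finset.image ρ Finset.univ = Finset.univ),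
          (List.ofFn (fun k => f (ρ k))).prod := by
          rw [Finset.smul_sum, Finset.sum_filter]
          exact Finset.sum_congr rfl fun ρ _ => by split <;> simp

set_option maxHeartbeats 1000000 in
/-- The exponential generating function identity for the coefficients. -/
lemma rhs_expand (n : ℕ) (x : ℝ) (K : ℕ → ℕ)
    (hK : ∀ m, ∑ T : Finset (Fin n), ((-1:ℝ) ^ T.card) * ((T.card : ℝ)) ^ m
        = ((-1:ℝ) ^ n) * K m) :
    (Real.exp x - 1) ^ n = ∑' m : ℕ, x ^ m / (m.factorial : ℝ) * (K m : ℝ) := by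
  have hK' : ∀ m, ∑ T : Finset (Fin n), ((-1:ℝ) ^ (n - T.card)) * ((T.card : ℝ)) ^ m
      = (K m : ℝ) := by
    intro m
    have hpow : ∀ T : Finset (Fin n), ((-1:ℝ) ^ (n - T.card)) = (-1) ^ n * (-1) ^ T.card := by
      intro T
      have hc : T.card ≤ n := by
        simpa using Finset.card_le_card (Finset.subset_univ T)
      have h2 : ((-1:ℝ) ^ T.card) * ((-1:ℝ) ^ T.card) = 1 := by
        rw [← pow_add]
        exact Even.neg_one_pow ⟨T.card, rfl⟩
      have h3 : ((-1:ℝ) ^ (n - T.card)) * ((-1:ℝ) ^ T.card) = (-1) ^ n := by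
        rw [← pow_add, Nat.sub_add_cancel hc]
      calc ((-1:ℝ) ^ (n - T.card))
          = ((-1:ℝ) ^ (n - T.card)) * (((-1:ℝ) ^ T.card) * ((-1:ℝ) ^ T.card)) := by
            rw [h2, mul_one]
        _ = (-1) ^ n * (-1) ^ T.card := by rw [← mul_assoc, h3]
    calc ∑ T : Finset (Fin n), ((-1:ℝ) ^ (n - T.card)) * ((T.card : ℝ)) ^ m
        = (-1:ℝ) ^ n * ∑ T : Finset (Fin n), ((-1:ℝ) ^ T.card) * ((T.card : ℝ)) ^ m := by
          rw [Finset.mul_sum]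
          exact Finset.sum_congr rfl fun T _ => by rw [hpow T]; ring
      _ = (-1:ℝ) ^ n * ((-1:ℝ) ^ n * K m) := by rw [hK m]
      _ = (((-1:ℝ) ^ n * (-1:ℝ) ^ n)) * K m := by ring
      _ = K m := by
          rw [← pow_add]
          rw [Even.neg_one_pow ⟨n, rfl⟩, one_mul]
  have hexp : ∀ c : ℕ, Real.exp x ^ c = ∑' m : ℕ, ((c : ℝ) * x) ^ m / (m.factorial : ℝ) := by
    intro c
    rw [← Real.exp_nat_mul, Real.exp_eq_exp_ℝ, NormedSpace.exp_eq_tsum_div]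
  have hsum : ∀ c : ℝ, Summable (fun m : ℕ => (c * x) ^ m / (m.factorial : ℝ)) :=
    fun c => Real.summable_pow_div_factorial (c * x)
  calc (Real.exp x - 1) ^ n
      = ∏ _i : Fin n, (Real.exp x + (-1)) := by
        rw [Finset.prod_const]
        simp [sub_eq_add_neg, Finset.card_univ]
    _ = ∑ T ∈ (Finset.univ : Finset (Fin n)).powerset,
          (∏ _i ∈ T, Real.exp x) * ∏ _i ∈ Finset.univ \ T, (-1:ℝ) :=
        Finset.prod_add _ _ _
    _ = ∑ T : Finset (Fin n), ((-1:ℝ) ^ (n - T.card)) * Real.exp x ^ T.card := by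
        rw [Finset.powerset_univ]
        refine Finset.sum_congr rfl fun T _ => ?_
        rw [Finset.prod_const, Finset.prod_const, Finset.card_sdiff_of_subset (Finset.subset_univ T)]
        rw [Finset.card_univ, Fintype.card_fin]
        ring
    _ = ∑ T : Finset (Fin n), ∑' m : ℕ,
          ((-1:ℝ) ^ (n - T.card)) * (((T.card : ℝ) * x) ^ m / (m.factorial : ℝ)) := by
        refine Finset.sum_congr rfl fun T _ => ?_
        rw [hexp T.card, ← tsum_mul_left]
    _ = ∑' m : ℕ, ∑ T : Finset (Fin n),
          ((-1:ℝ) ^ (n - T.card)) * (((T.card : ℝ) * x) ^ m / (m.factorial : ℝ)) :=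
        (Summable.tsum_finsetSum fun T _ => (hsum (T.card : ℝ)).mul_left _).symm
    _ = ∑' m : ℕ, x ^ m / (m.factorial : ℝ) * (K m : ℝ) := by
        refine tsum_congr fun m => ?_
        rw [← hK' m, Finset.mul_sum]
        refine Finset.sum_congr rfl fun T _ => ?_
        rw [mul_pow]
        ring

lemma norm_list_prod_le_one {E : Type*} [NormedAddCommGroup E] [NormedSpace ℂ E] :
    ∀ (l : List (E →L[ℂ] E)), (∀ u ∈ l, ‖u‖ ≤ 1) → ‖l.prod‖ ≤ 1
  | [], _ => by
      simp only [List.prod_nil, ContinuousLinearMap.one_def]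
      exact ContinuousLinearMap.norm_id_le
  | (a :: l), h => by
      rw [List.prod_cons]
      have ha : ‖a‖ ≤ 1 := h a (List.mem_cons_self (a := a) (l := l))
      have hl : ‖l.prod‖ ≤ 1 := norm_list_prod_le_one l fun u hu => h u (List.mem_cons_of_mem a hu)
      calc ‖a * l.prod‖ ≤ ‖a‖ * ‖l.prod‖ := norm_mul_le _ _
        _ ≤ 1 * 1 := mul_le_mul ha hl (norm_nonneg _) zero_le_one
        _ = 1 := one_mul 1

set_option maxHeartbeats 1000000 in
/-- **Lemma 10 of the paper (weight bound computation).** Let `A_1, …, A_n` be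
operators of norm at most `1` on a finite-dimensional complex Hilbert space and let
`β ∈ ℂ`.  Then `‖Σ_{T ⊆ {1,…,n}} (−1)^{|T|} exp(−β Σ_{i∈T} A_i)‖ ≤ (e^{|β|} − 1)^n`. -/
theorem inclusion_exclusion_exp_norm_bound
    {E : Type*} [NormedAddCommGroup E] [InnerProductSpace ℂ E] [FiniteDimensional ℂ E]
    (n : ℕ) (hn : 1 ≤ n) (A : Fin n → E →L[ℂ] E) (hA : ∀ i, ‖A i‖ ≤ 1) (β : ℂ) :
    ‖∑ T : Finset (Fin n), ((-1 : ℂ) ^ T.card) •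
        NormedSpace.exp ((-β) • ∑ i ∈ T, A i)‖ ≤
      (Real.exp (‖β‖) - 1) ^ n := by
  classical
  set x : ℝ := ‖β‖ with hxdef
  have hx0 : 0 ≤ x := norm_nonneg β
  have hxβ : ‖β‖ = x := hxdef.symm
  set B : Finset (Fin n) → (E →L[ℂ] E) := fun T => ∑ i ∈ T, A i with hB
  set K : ℕ → ℕ := fun m => (Finset.univ.filter
      (fun ρ : Fin m → Fin n => Finset.image ρ Finset.univ = Finset.univ)).card with hKdef
  set C : ℕ → (E →L[ℂ] E) := fun m => ∑ T : Finset (Fin n), ((-1:ℂ) ^ T.card) • (B T) ^ m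
    with hCdef
  set c : ℕ → ℂ := fun m => ((m.factorial : ℂ))⁻¹ * (-β) ^ m with hcdef
  -- norm of the operator products
  have hPnorm : ∀ {m : ℕ} (ρ : Fin m → Fin n), ‖(List.ofFn fun k => A (ρ k)).prod‖ ≤ 1 := by
    intro m ρ
    refine norm_list_prod_le_one _ fun u hu => ?_
    rw [List.mem_ofFn] at hu
    obtain ⟨k, rfl⟩ := hu
    exact hA (ρ k)
  -- norm bound on C m
  have hCnorm : ∀ m, ‖C m‖ ≤ (K m : ℝ) := by
    intro m
    simp only [hCdef]
    rw [key_incl_excl n m A, norm_smul]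
    have h1 : ‖(-1:ℂ) ^ n‖ = 1 := by
      rw [norm_pow, norm_neg, norm_one, one_pow]
    rw [h1, one_mul]
    calc ‖∑ ρ ∈ Finset.univ.filter
          (fun ρ : Fin m → Fin n => Finset.image ρ Finset.univ = Finset.univ),
          (List.ofFn (fun k => A (ρ k))).prod‖
        ≤ ∑ ρ ∈ Finset.univ.filter
          (fun ρ : Fin m → Fin n => Finset.image ρ Finset.univ = Finset.univ),
          ‖(List.ofFn (fun k => A (ρ k))).prod‖ := norm_sum_le _ _
      _ ≤ ∑ _ρ ∈ Finset.univ.filter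
          (fun ρ : Fin m → Fin n => Finset.image ρ Finset.univ = Finset.univ), (1:ℝ) :=
          Finset.sum_le_sum fun ρ _ => hPnorm ρ
      _ = (K m : ℝ) := by rw [Finset.sum_const]; simp only [hKdef]; simp
  -- K m ≤ n ^ m
  have hKle : ∀ m, (K m : ℝ) ≤ ((n : ℝ)) ^ m := by
    intro m
    have h1 : K m ≤ Fintype.card (Fin m → Fin n) := by
      simp only [hKdef, ← Finset.card_univ]
      exact Finset.card_filter_le _ _
    have h2 : Fintype.card (Fin m → Fin n) = n ^ m := by
      rw [Fintype.card_fun, Fintype.card_fin, Fintype.card_fin]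
    calc (K m : ℝ) ≤ (Fintype.card (Fin m → Fin n) : ℝ) := by exact_mod_cast h1
      _ = ((n:ℝ)) ^ m := by rw [h2]; push_cast; ring
  -- scalar instance of the inclusion-exclusion identity
  have hKs : ∀ m, ∑ T : Finset (Fin n), ((-1:ℝ) ^ T.card) * ((T.card : ℝ)) ^ m
      = ((-1:ℝ) ^ n) * K m := by
    intro m
    have h := key_incl_excl (𝕜 := ℝ) (R := ℝ) n m (fun _ => (1:ℝ))
    simpa [hKdef, Finset.sum_const, smul_eq_mul, List.ofFn_const, List.prod_replicate,
      mul_one] using h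
  -- summability of the exponential series pieces
  have hsummC : ∀ (a : ℂ) (T : Finset (Fin n)),
      Summable (fun m : ℕ => (a * ((m.factorial : ℂ))⁻¹ * (-β) ^ m) • (B T) ^ m) := by
    intro a T
    have h := (NormedSpace.expSeries_summable' (𝕂 := ℂ) ((-β) • B T)).const_smul a
    have heq : (fun m : ℕ => a • (((m.factorial : ℂ))⁻¹ • ((-β) • B T) ^ m))
        = fun m : ℕ => (a * ((m.factorial : ℂ))⁻¹ * (-β) ^ m) • (B T) ^ m := by
      funext m
      rw [smul_pow, smul_smul, smul_smul, mul_assoc]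
    rwa [heq] at h
  -- step 1 : rewrite the LHS as a tsum
  have h1 : (∑ T : Finset (Fin n), ((-1:ℂ) ^ T.card) • NormedSpace.exp ((-β) • B T))
      = ∑' m : ℕ, (c m) • (C m) := by
    have hTa : ∀ T : Finset (Fin n), ((-1:ℂ) ^ T.card) • NormedSpace.exp ((-β) • B T)
        = ∑' m : ℕ, (((-1:ℂ) ^ T.card) * ((m.factorial : ℂ))⁻¹ * (-β) ^ m) • (B T) ^ m := by
      intro T
      rw [NormedSpace.exp_eq_tsum (𝕂 := ℂ)]
      rw [← Summable.tsum_const_smul ((-1:ℂ) ^ T.card)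
        (NormedSpace.expSeries_summable' (𝕂 := ℂ) ((-β) • B T))]
      refine tsum_congr fun m => ?_
      rw [smul_pow, smul_smul, smul_smul, mul_assoc]
    calc (∑ T : Finset (Fin n), ((-1:ℂ) ^ T.card) • NormedSpace.exp ((-β) • B T))
        = ∑ T : Finset (Fin n), ∑' m : ℕ,
            (((-1:ℂ) ^ T.card) * ((m.factorial : ℂ))⁻¹ * (-β) ^ m) • (B T) ^ m :=
          Finset.sum_congr rfl fun T _ => hTa T
      _ = ∑' m : ℕ, ∑ T : Finset (Fin n),
            (((-1:ℂ) ^ T.card) * ((m.factorial : ℂ))⁻¹ * (-β) ^ m) • (B T) ^ m :=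
          (Summable.tsum_finsetSum fun T _ => hsummC ((-1:ℂ) ^ T.card) T).symm
      _ = ∑' m : ℕ, (c m) • (C m) := by
          refine tsum_congr fun m => ?_
          simp only [hCdef, hcdef]
          rw [Finset.smul_sum]
          refine Finset.sum_congr rfl fun T _ => ?_
          rw [smul_smul]
          congr 1
          ring
  -- term-wise norm bound
  have hcnorm : ∀ m : ℕ, ‖c m‖ = x ^ m / (m.factorial : ℝ) := by
    intro m
    simp only [hcdef]
    rw [norm_mul, norm_inv, norm_pow, norm_neg, hxβ]
    rw [div_eq_mul_inv, mul_comm]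
    congr 2
    simp
  have hterm : ∀ m : ℕ, ‖(c m) • (C m)‖ ≤ x ^ m / (m.factorial : ℝ) * (K m : ℝ) := by
    intro m
    have hns := norm_smul (c m) (C m)
    rw [hns, hcnorm m]
    refine mul_le_mul_of_nonneg_left (hCnorm m) ?_
    positivity
  -- the majorant is summable
  have hmaj : Summable (fun m : ℕ => x ^ m / (m.factorial : ℝ) * (K m : ℝ)) := by
    refine Summable.of_nonneg_of_le (fun m => ?_) (fun m => ?_)
      (Real.summable_pow_div_factorial ((n : ℝ) * x))
    · positivity
    · calc x ^ m / (m.factorial : ℝ) * (K m : ℝ)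
          ≤ x ^ m / (m.factorial : ℝ) * ((n:ℝ)) ^ m := by
            refine mul_le_mul_of_nonneg_left (hKle m) ?_
            positivity
        _ = ((n:ℝ) * x) ^ m / (m.factorial : ℝ) := by
            rw [mul_pow]
            ring
  have hnorm : Summable (fun m : ℕ => ‖(c m) • (C m)‖) :=
    Summable.of_nonneg_of_le (fun m => norm_nonneg _) hterm hmaj
  -- conclude
  rw [h1]
  calc ‖∑' m : ℕ, (c m) • (C m)‖ ≤ ∑' m : ℕ, ‖(c m) • (C m)‖ :=
        norm_tsum_le_tsum_norm hnorm
    _ ≤ ∑' m : ℕ, x ^ m / (m.factorial : ℝ) * (K m : ℝ) := Summable.tsum_le_tsum hterm hnorm hmaj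
    _ = (Real.exp x - 1) ^ n := (rhs_expand n x K hKs).symm
end

section
/- Let Φ = (1/4)(X⊗X − Y⊗Y − Z⊗Z), a self-adjoint operator on ℂ²⊗ℂ², where X, Y, Z are the Pauli matrices. Then ⟨00| exp(−iπ Φ) |00⟩ = 0 while Tr[exp(−iπ Φ)] = 2 e^{−iπ/4} ≠ 0. Consequently, for the quantum spin system on the multigraph with two vertices joined by Δ parallel edges, each carrying the interaction Φ, with the operator Ψ(v) = |0⟩⟨0| at each vertex, the thermal expectation value at inverse temperature β = iπ/Δ equals 0; i.e. the algorithmic condition for thermal expectation values is optimal in the sense of zero freeness. -/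
open scoped Matrix Kronecker

namespace Stmt19

/-- The Pauli `X` matrix. -/
noncomputable def X : Matrix (Fin 2) (Fin 2) ℂ := !![0, 1; 1, 0]

/-- The Pauli `Y` matrix. -/
noncomputable def Y : Matrix (Fin 2) (Fin 2) ℂ := !![0, -Complex.I; Complex.I, 0]

/-- The Pauli `Z` matrix. -/
noncomputable def Z : Matrix (Fin 2) (Fin 2) ℂ := !![1, 0; 0, -1]

/-- The two-qubit interaction `Φ = (1/4)(X⊗X − Y⊗Y − Z⊗Z)`. -/
noncomputable def Φ : Matrix (Fin 2 × Fin 2) (Fin 2 × Fin 2) ℂ :=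
  (1 / 4 : ℂ) • (X ⊗ₖ X - Y ⊗ₖ Y - Z ⊗ₖ Z)

/-- The projector `|0⟩⟨0|` onto the state `|0⟩` of one qubit. -/
noncomputable def P0 : Matrix (Fin 2) (Fin 2) ℂ := !![1, 0; 0, 0]

noncomputable def cc : ℂ := -(Complex.I * Real.pi) / 4

noncomputable def vv : Fin 2 × Fin 2 → ℂ :=
  fun p => if p = (1, 1) then cc + Real.pi * Complex.I else cc

noncomputable def Umat : Matrix (Fin 2 × Fin 2) (Fin 2 × Fin 2) ℂ :=
  Matrix.of fun p q =>
    if p = (0,0) ∧ q = (0,0) then 1 else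
    if p = (0,0) ∧ q = (1,1) then 1 else
    if p = (0,1) ∧ q = (0,1) then 1 else
    if p = (1,0) ∧ q = (1,0) then 1 else
    if p = (1,1) ∧ q = (0,0) then 1 else
    if p = (1,1) ∧ q = (1,1) then -1 else 0

noncomputable def Vmat : Matrix (Fin 2 × Fin 2) (Fin 2 × Fin 2) ℂ :=
  Matrix.of fun p q =>
    if p = (0,0) ∧ q = (0,0) then 1/2 else
    if p = (0,0) ∧ q = (1,1) then 1/2 else
    if p = (0,1) ∧ q = (0,1) then 1 else
    if p = (1,0) ∧ q = (1,0) then 1 else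
    if p = (1,1) ∧ q = (0,0) then 1/2 else
    if p = (1,1) ∧ q = (1,1) then -(1/2) else 0

lemma hUV : Umat * Vmat = 1 := by
  ext p q
  fin_cases p <;> fin_cases q <;>
    simp [Umat, Vmat, Matrix.mul_apply, Fintype.sum_prod_type, Fin.sum_univ_two,
      Matrix.one_apply, Prod.ext_iff] <;> norm_num

lemma hVU : Vmat * Umat = 1 := by
  ext p q
  fin_cases p <;> fin_cases q <;>
    simp [Umat, Vmat, Matrix.mul_apply, Fintype.sum_prod_type, Fin.sum_univ_two,
      Matrix.one_apply, Prod.ext_iff] <;> norm_num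

noncomputable def Uu : (Matrix (Fin 2 × Fin 2) (Fin 2 × Fin 2) ℂ)ˣ :=
  ⟨Umat, Vmat, hUV, hVU⟩

lemma hM : (-(Complex.I * Real.pi)) • Φ = Umat * Matrix.diagonal vv * Vmat := by
  ext p q
  fin_cases p <;> fin_cases q <;>
    simp [Umat, Vmat, vv, cc, Φ, X, Y, Z, Matrix.mul_apply, Matrix.diagonal_apply,
      Fintype.sum_prod_type, Fin.sum_univ_two, Matrix.kroneckerMap_apply,
      Prod.ext_iff] <;> ring

lemma hexp : NormedSpace.exp ((-(Complex.I * Real.pi)) • Φ) =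
    Umat * Matrix.diagonal (fun p => Complex.exp (vv p)) * Vmat := by
  rw [hM]
  have h1 : Umat * Matrix.diagonal vv * Vmat =
      (Uu : Matrix (Fin 2 × Fin 2) (Fin 2 × Fin 2) ℂ) * Matrix.diagonal vv *
        ((Uu⁻¹ : (Matrix (Fin 2 × Fin 2) (Fin 2 × Fin 2) ℂ)ˣ) :
          Matrix (Fin 2 × Fin 2) (Fin 2 × Fin 2) ℂ) := rfl
  rw [h1, Matrix.exp_units_conj, Matrix.exp_diagonal]
  have : NormedSpace.exp vv = fun p => Complex.exp (vv p) := by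
    rw [Pi.exp_def, ← Complex.exp_eq_exp_ℂ]
  rw [this]
  rfl

lemma hentry : (NormedSpace.exp ((-(Complex.I * Real.pi)) • Φ))
    ((0 : Fin 2), (0 : Fin 2)) ((0 : Fin 2), (0 : Fin 2)) = 0 := by
  rw [hexp]
  have hd : Complex.exp (cc + Real.pi * Complex.I) = -Complex.exp cc := by
    rw [Complex.exp_add, Complex.exp_pi_mul_I]; ring
  simp [Umat, Vmat, vv, Matrix.mul_apply, Matrix.diagonal_apply,
    Fintype.sum_prod_type, Fin.sum_univ_two, Prod.ext_iff, hd]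

lemma htrace : Matrix.trace (NormedSpace.exp ((-(Complex.I * Real.pi)) • Φ)) =
    2 * Complex.exp (-(Complex.I * Real.pi) / 4) := by
  rw [hexp, Matrix.trace_mul_cycle, hVU, Matrix.one_mul]
  have hd : Complex.exp (cc + Real.pi * Complex.I) = -Complex.exp cc := by
    rw [Complex.exp_add, Complex.exp_pi_mul_I]; ring
  simp [Matrix.trace_diagonal, Fintype.sum_prod_type, Fin.sum_univ_two, vv,
    Prod.ext_iff, hd, cc]
  ring

/-- **Theorem 12 of the paper.** For `Φ = (1/4)(X⊗X − Y⊗Y − Z⊗Z)` one has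
`⟨00| exp(−iπΦ) |00⟩ = 0` while `Tr[exp(−iπΦ)] = 2·e^{−iπ/4} ≠ 0`.  Consequently,
for the quantum spin system on the multigraph with two vertices joined by `Δ`
parallel edges each carrying the interaction `Φ`, with `Ψ(v) = |0⟩⟨0|` at each
vertex, the thermal expectation value at inverse temperature `β = iπ/Δ` is `0`. -/
theorem thermal_expectation_zero :
    (NormedSpace.exp ((-(Complex.I * Real.pi)) • Φ))
        ((0 : Fin 2), (0 : Fin 2)) ((0 : Fin 2), (0 : Fin 2)) = 0 ∧
    Matrix.trace (NormedSpace.exp ((-(Complex.I * Real.pi)) • Φ)) =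
      2 * Complex.exp (-(Complex.I * Real.pi) / 4) ∧
    Matrix.trace (NormedSpace.exp ((-(Complex.I * Real.pi)) • Φ)) ≠ 0 ∧
    ∀ Δ : ℕ, 1 ≤ Δ →
      Matrix.trace ((P0 ⊗ₖ P0) *
          NormedSpace.exp ((-(Complex.I * Real.pi / (Δ : ℂ))) • ((Δ : ℂ) • Φ))) /
        Matrix.trace (NormedSpace.exp
          ((-(Complex.I * Real.pi / (Δ : ℂ))) • ((Δ : ℂ) • Φ))) = 0 := by
  refine ⟨hentry, htrace, ?_, ?_⟩
  · rw [htrace]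
    exact mul_ne_zero two_ne_zero (Complex.exp_ne_zero _)
  · intro Δ hΔ
    have hΔ' : (Δ : ℂ) ≠ 0 := Nat.cast_ne_zero.mpr (by omega)
    have hs : (-(Complex.I * Real.pi / (Δ : ℂ))) • ((Δ : ℂ) • Φ) =
        (-(Complex.I * Real.pi)) • Φ := by
      rw [smul_smul]
      congr 1
      field_simp
    rw [hs]
    have hnum : Matrix.trace ((P0 ⊗ₖ P0) *
        NormedSpace.exp ((-(Complex.I * Real.pi)) • Φ)) = 0 := by
      have := hentry
      simp [Matrix.trace, Matrix.mul_apply, Fintype.sum_prod_type, Fin.sum_univ_two,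
        Matrix.kroneckerMap_apply, P0] at this ⊢
      simpa using this
    rw [hnum, zero_div]

end Stmt19
end
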